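/- If the bag sizes are unbounded, i.e. for every N ∈ ℕ there exists v ∈ ι such that B(v) contains at least N elements, then the set of connected components of F_β containing some element of ⋃_v B(v) is infinite. -/
import Mathlib


open Function

/-- The forest `F_β`: two distinct elements `a, b` are adjacent iff both lie in some
bag and one is the image of the other under `β`. -/
def forestF {ι S : Type*} (B : ι → Set S) (β : S → S) : SimpleGraph S :=
  SimpleGraph.fromRel
    (fun a b => (a ∈ ⋃ v, B v) ∧ (b ∈ ⋃ v, B v) ∧ b = β a)

variable {ι S : Type*}

lemma iterate_mem_bag (next : ι → ι) (B : ι → Set S) (β : S → S)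
    (hmap : ∀ v, ∀ s ∈ B v, β s ∈ B (next v)) :
    ∀ (j : ℕ) (v : ι), ∀ s ∈ B v, β^[j] s ∈ B (next^[j] v) := by
  intro j
  induction j with
  | zero => intro v s hs; simpa using hs
  | succ n ih =>
    intro v s hs
    rw [Function.iterate_succ_apply', Function.iterate_succ_apply']
    exact hmap _ _ (ih v s hs)

lemma iterate_injOn_bag (next : ι → ι) (B : ι → Set S) (β : S → S)
    (hmap : ∀ v, ∀ s ∈ B v, β s ∈ B (next v)) (hinj : ∀ v, Set.InjOn β (B v)) :
    ∀ (j : ℕ) (v : ι), Set.InjOn β^[j] (B v) := by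
  intro j
  induction j with
  | zero => intro v a _ b _ h; simpa using h
  | succ n ih =>
    intro v a ha b hb h
    rw [Function.iterate_succ_apply', Function.iterate_succ_apply'] at h
    exact ih v ha hb
      (hinj (next^[n] v) (iterate_mem_bag next B β hmap n v a ha)
        (iterate_mem_bag next B β hmap n v b hb) h)

lemma reachable_iterate (B : ι → Set S) (β : S → S) (a b : S)
    (h : (forestF B β).Reachable a b) : ∃ j k : ℕ, β^[j] a = β^[k] b := by
  rw [SimpleGraph.reachable_iff_reflTransGen] at h
  induction h with
  | refl => exact ⟨0, 0, rfl⟩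
  | tail _ hbc ih =>
    obtain ⟨j, k, hjk⟩ := ih
    rw [forestF, SimpleGraph.fromRel_adj] at hbc
    rcases hbc.2 with ⟨_, _, hc⟩ | ⟨_, _, hc⟩
    · refine ⟨j + 1, k, ?_⟩
      rw [hc, ← Function.iterate_succ_apply, Function.iterate_succ_apply',
        Function.iterate_succ_apply', hjk]
    · refine ⟨j, k + 1, ?_⟩
      rw [hjk, hc, ← Function.iterate_succ_apply]

/-- If the bag sizes are unbounded, then `F_β` has infinitely many connected components
meeting the union of the bags. -/
theorem forestF_infinitely_many_components (next : ι → ι)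
    (hnext : ∀ (v : ι) (j k : ℕ), next^[j] v = next^[k] v → j = k)
    (B : ι → Set S) (hdisj : Pairwise (Disjoint on B))
    (β : S → S) (hmap : ∀ v, ∀ s ∈ B v, β s ∈ B (next v))
    (hinj : ∀ v, Set.InjOn β (B v))
    (hunb : ∀ N : ℕ, ∃ v : ι, ∃ T : Finset S, ↑T ⊆ B v ∧ N ≤ T.card) :
    {c : (forestF B β).ConnectedComponent |
      ∃ s ∈ ⋃ v, B v, (forestF B β).connectedComponentMk s = c}.Infinite := by
  by_contra hfin
  rw [Set.not_infinite] at hfin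
  obtain ⟨v, T, hTB, hcard⟩ := hunb (hfin.toFinset.card + 1)
  have hmaps : ∀ a ∈ T, (forestF B β).connectedComponentMk a ∈ hfin.toFinset := by
    intro a ha
    rw [Set.Finite.mem_toFinset]
    exact ⟨a, Set.mem_iUnion.2 ⟨v, hTB ha⟩, rfl⟩
  have hinjOn : Set.InjOn (fun a => (forestF B β).connectedComponentMk a) ↑T := by
    intro a ha b hb hab
    have hreach : (forestF B β).Reachable a b :=
      (SimpleGraph.ConnectedComponent.eq).1 hab
    obtain ⟨j, k, hjk⟩ := reachable_iterate B β a b hreach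
    have haB : a ∈ B v := hTB ha
    have hbB : b ∈ B v := hTB hb
    have hja := iterate_mem_bag next B β hmap j v a haB
    have hkb := iterate_mem_bag next B β hmap k v b hbB
    have hvjk : next^[j] v = next^[k] v := by
      by_contra hne
      exact (hdisj hne).le_bot ⟨hja, hjk ▸ hkb⟩
    have hjk' : j = k := hnext v j k hvjk
    subst hjk'
    exact iterate_injOn_bag next B β hmap hinj j v haB hbB hjk
  have := Finset.card_le_card_of_injOn _ hmaps hinjOn
  omega
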